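/- In a split graph G with maximum clique K_s (s ≥ 3), independent set I, and λ₂(G) < -1/2, there is at most one vertex z ∈ I with at least two neighbors in K_s. -/

import Mathlib

open Real

/-- The `k`-th largest eigenvalue (1-indexed, with multiplicity) of a real
symmetric matrix; junk value `0` if the matrix is not Hermitian. -/
noncomputable def kthLargestEig {V : Type*} [Fintype V] [DecidableEq V]
    (k : ℕ) (A : Matrix V V ℝ) : ℝ :=
  if h : A.IsHermitian then
    ((Finset.univ.val.map h.eigenvalues).sort (· ≤ ·)).getD (Fintype.card V - k) 0
  else 0

/-- The second largest eigenvalue of a real symmetric matrix. -/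
noncomputable def lambda2 {V : Type*} [Fintype V] [DecidableEq V]
    (A : Matrix V V ℝ) : ℝ := kthLargestEig 2 A

/-- The distance matrix of a graph (entries are graph distances, as reals). -/
noncomputable def distMatrix {V : Type*} [Fintype V] (G : SimpleGraph V) :
    Matrix V V ℝ := fun u v => (G.dist u v : ℝ)

/-- A graph is chordal if every cycle of length at least 4 has a chord, i.e. an
edge of the graph joining two vertices of the cycle that is not a cycle edge. -/
def SimpleGraph.Chordal {V : Type*} (G : SimpleGraph V) : Prop :=
  ∀ (u : V) (w : G.Walk u u), w.IsCycle → 4 ≤ w.length →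
    ∃ x y, x ∈ w.support ∧ y ∈ w.support ∧ G.Adj x y ∧ s(x, y) ∉ w.edges

lemma sorted_aux {l : List ℝ} (hs : l.Pairwise (· ≤ ·)) {n : ℕ} (hlen : l.length = n)
    (hn : 2 ≤ n) {c : ℝ} (h : l.getD (n-2) 0 < c) :
    (l.countP (fun x => decide (c ≤ x))) ≤ 1 := by
  have hidx : n - 2 < l.length := by omega
  have hget : l.getD (n-2) 0 = l[n-2] := List.getD_eq_getElem l 0 hidx
  have htd : l = l.take (n-1) ++ l.drop (n-1) := (List.take_append_drop _ _).symm
  have h1 : (l.take (n-1)).countP (fun x => decide (c ≤ x)) = 0 := by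
    rw [List.countP_eq_zero]
    intro a ha
    obtain ⟨i, hi, rfl⟩ := List.mem_take_iff_getElem.mp ha
    have hi2 : i ≤ n - 2 := by omega
    have : l[i] ≤ l[n-2] := by
      have := hs.rel_get_of_le (a := ⟨i, by omega⟩) (b := ⟨n-2, hidx⟩) (by simpa using hi2)
      simpa using this
    simp only [decide_eq_true_eq]
    push_neg
    calc l[i] ≤ l[n-2] := this
    _ < c := hget ▸ h
  have h2 : (l.drop (n-1)).countP (fun x => decide (c ≤ x)) ≤ 1 := by
    calc (l.drop (n-1)).countP _ ≤ (l.drop (n-1)).length := List.countP_le_length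
    _ = l.length - (n-1) := List.length_drop
    _ ≤ 1 := by omega
  calc l.countP (fun x => decide (c ≤ x))
      = (l.take (n-1) ++ l.drop (n-1)).countP (fun x => decide (c ≤ x)) := by rw [← htd]
    _ = _ + _ := List.countP_append
    _ ≤ 0 + 1 := by omega
    _ = 1 := by omega

lemma lambda2_lt_imp {V : Type*} [Fintype V] [DecidableEq V] [Nonempty V]
    (A : Matrix V V ℝ) (hA : A.IsHermitian) (hn : 2 ≤ Fintype.card V) {c : ℝ}
    (h : lambda2 A < c) : ∃ i₀ : V, ∀ i, i ≠ i₀ → hA.eigenvalues i < c := by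
  classical
  obtain ⟨i₀, -, hmaxi⟩ := Finset.exists_max_image Finset.univ hA.eigenvalues ⟨Classical.arbitrary V, Finset.mem_univ _⟩
  refine ⟨i₀, fun i hi => ?_⟩
  by_contra hge
  push_neg at hge
  have hge0 : c ≤ hA.eigenvalues i₀ := le_trans hge (hmaxi i (Finset.mem_univ _))
  set l := ((Finset.univ.val.map hA.eigenvalues).sort (· ≤ ·)) with hl
  have hlen : l.length = Fintype.card V := by
    simp [hl, Multiset.length_sort]
  have hlam : lambda2 A = l.getD (Fintype.card V - 2) 0 := by
    rw [lambda2, kthLargestEig, dif_pos hA]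
  have hcount : l.countP (fun x => decide (c ≤ x)) ≤ 1 :=
    sorted_aux (Multiset.pairwise_sort _ _) hlen hn (hlam ▸ h)
  have hcount2 : 2 ≤ (Finset.univ.filter (fun j => c ≤ hA.eigenvalues j)).card := by
    apply Finset.one_lt_card.mpr
    exact ⟨i, by simp [hge], i₀, by simp [hge0], hi⟩
  have heq : (Finset.univ.filter (fun j => c ≤ hA.eigenvalues j)).card
      = l.countP (fun x => decide (c ≤ x)) := by
    have h1 : (Finset.univ.filter (fun j => c ≤ hA.eigenvalues j)).card
        = Multiset.card (Finset.univ.val.filter (fun j => c ≤ hA.eigenvalues j)) := by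
      rw [Finset.card, Finset.filter_val]
    have hm := Multiset.countP_map hA.eigenvalues Finset.univ.val (fun x => c ≤ x)
    rw [h1, ← hm]
    conv_lhs => rw [← Multiset.sort_eq (Finset.univ.val.map hA.eigenvalues) (· ≤ ·)]
    rw [Multiset.coe_countP, ← hl]
  omega


lemma key_lemma {V : Type*} [Fintype V] [DecidableEq V]
    (A : Matrix V V ℝ) (hA : A.IsHermitian) (hn : 2 ≤ Fintype.card V)
    {m : ℕ} (p : Fin m → V) (hp : Function.Injective p)
    (U W : Fin m → ℝ) (hUW : ∑ k, U k * W k = 0)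
    (hU : ∑ k, U k * U k ≠ 0) (hW : ∑ k, W k * W k ≠ 0)
    (h : ∀ α β : ℝ, -1/2 * (∑ k, (α * U k + β * W k)^2)
        ≤ ∑ k, ∑ l, (α * U k + β * W k) * ((α * U l + β * W l) * A (p k) (p l))) :
    ¬ (lambda2 A < -1/2) := by
  intro hlt
  have hcpos : 0 < Fintype.card V := by omega
  have hne : Nonempty V := Fintype.card_pos_iff.mp hcpos
  obtain ⟨i₀, hi₀⟩ := lambda2_lt_imp A hA hn hlt
  set Bv : V → (V → ℝ) := fun i => ⇑(hA.eigenvectorBasis i) with hBv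
  set e : (Fin m → ℝ) → (V → ℝ) := fun y v => ∑ k, if v = p k then y k else 0 with he
  have f1 : ∀ (y : Fin m → ℝ) (w : V → ℝ), (∑ v, e y v * w v) = ∑ k, y k * w (p k) := by
    intro y w
    have hv : ∀ v, e y v * w v = ∑ k, if v = p k then y k * w v else 0 := by
      intro v
      rw [he]
      simp only [Finset.sum_mul, ite_mul, zero_mul]
    rw [Finset.sum_congr rfl (fun v _ => hv v), Finset.sum_comm]
    refine Finset.sum_congr rfl (fun k _ => ?_)
    rw [Finset.sum_ite_eq' Finset.univ (p k) (fun v => y k * w v), if_pos (Finset.mem_univ _)]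
  have f2 : ∀ (y : Fin m → ℝ) (k : Fin m), e y (p k) = y k := by
    intro y k
    rw [he]
    simp only [hp.eq_iff]
    rw [Finset.sum_ite_eq Finset.univ k y, if_pos (Finset.mem_univ _)]
  set a : ℝ := ∑ v, Bv i₀ v * e U v with ha
  set b : ℝ := ∑ v, Bv i₀ v * e W v with hb
  obtain ⟨α, β, hαβ, hortho⟩ : ∃ α β : ℝ, ¬(α = 0 ∧ β = 0) ∧ α * a + β * b = 0 := by
    by_cases hab : a = 0 ∧ b = 0
    · exact ⟨1, 0, by simp, by simp [hab.1, hab.2]⟩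
    · refine ⟨b, -a, ?_, by ring⟩
      rintro ⟨h1, h2⟩
      exact hab ⟨by linarith, h1⟩
  set y : Fin m → ℝ := fun k => α * U k + β * W k with hy
  set x : V → ℝ := e y with hx
  have hUpos : 0 < ∑ k, U k * U k :=
    lt_of_le_of_ne (Finset.sum_nonneg fun k _ => mul_self_nonneg _) (Ne.symm hU)
  have hWpos : 0 < ∑ k, W k * W k :=
    lt_of_le_of_ne (Finset.sum_nonneg fun k _ => mul_self_nonneg _) (Ne.symm hW)
  have hyy : 0 < ∑ k, y k * y k := by
    have expand : ∑ k, y k * y k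
        = α^2 * (∑ k, U k * U k) + β^2 * (∑ k, W k * W k) + 2*α*β*(∑ k, U k * W k) := by
      rw [Finset.mul_sum, Finset.mul_sum, Finset.mul_sum, ← Finset.sum_add_distrib,
        ← Finset.sum_add_distrib]
      exact Finset.sum_congr rfl fun k _ => by rw [hy]; ring
    rw [expand, hUW, mul_zero, add_zero]
    rcases not_and_or.mp hαβ with h' | h'
    · nlinarith [sq_nonneg α, sq_nonneg β, sq_pos_of_ne_zero h']
    · nlinarith [sq_nonneg α, sq_nonneg β, sq_pos_of_ne_zero h']
  have elin : ∀ v, e y v = α * e U v + β * e W v := by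
    intro v
    rw [he]
    simp only
    rw [Finset.mul_sum, Finset.mul_sum, ← Finset.sum_add_distrib]
    refine Finset.sum_congr rfl fun k _ => ?_
    rw [hy]
    split <;> ring
  set xE : EuclideanSpace ℝ V := (WithLp.equiv 2 (V → ℝ)).symm x with hxE
  set AxE : EuclideanSpace ℝ V := (WithLp.equiv 2 (V → ℝ)).symm (A.mulVec x) with hAxE
  set κ : V → ℝ := fun i => ∑ v, Bv i v * x v with hκ
  have hinner1 : ∀ i : V, (inner ℝ (hA.eigenvectorBasis i) xE : ℝ) = κ i := by
    intro i
    rw [PiLp.inner_apply]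
    simp [hκ, hBv, hxE, mul_comm]
  have hinner2 : ∀ i : V, (inner ℝ xE (hA.eigenvectorBasis i) : ℝ) = κ i := by
    intro i
    rw [real_inner_comm]
    exact hinner1 i
  have hxx : ∑ v, x v * x v = ∑ k, y k * y k := by
    rw [hx, f1 y (e y)]
    exact Finset.sum_congr rfl fun k _ => by rw [f2]
  have hinX : (inner ℝ xE xE : ℝ) = ∑ v, x v * x v := by
    rw [PiLp.inner_apply]
    simp [hxE, sq]
  have hinAx : (inner ℝ xE AxE : ℝ) = ∑ v, x v * (A.mulVec x) v := by
    rw [PiLp.inner_apply]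
    simp [hxE, hAxE, mul_comm]
  have hpar : ∑ i, κ i * κ i = ∑ k, y k * y k := by
    have h1 := (hA.eigenvectorBasis).sum_inner_mul_inner xE xE
    calc ∑ i, κ i * κ i
        = ∑ i, (inner ℝ xE (hA.eigenvectorBasis i) : ℝ) * inner ℝ (hA.eigenvectorBasis i) xE :=
          Finset.sum_congr rfl (fun i _ => by rw [hinner1 i, hinner2 i])
      _ = inner ℝ xE xE := h1
      _ = ∑ v, x v * x v := hinX
      _ = ∑ k, y k * y k := hxx
  have ht : A.transpose = A := by
    ext i j
    rw [Matrix.transpose_apply]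
    have := hA.apply i j
    simpa using this
  have hq2 : ∀ i : V, (inner ℝ (hA.eigenvectorBasis i) AxE : ℝ) = hA.eigenvalues i * κ i := by
    intro i
    have hd : (inner ℝ (hA.eigenvectorBasis i) AxE : ℝ) = dotProduct (Bv i) (A.mulVec x) := by
      rw [PiLp.inner_apply]
      simp [hBv, hAxE, dotProduct, mul_comm]
    rw [hd, Matrix.dotProduct_mulVec]
    have hvm : Matrix.vecMul (Bv i) A = A.mulVec (Bv i) := by
      calc Matrix.vecMul (Bv i) A = Matrix.vecMul (Bv i) A.transpose := by rw [ht]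
        _ = A.mulVec (Bv i) := Matrix.vecMul_transpose A (Bv i)
    rw [hvm, hBv]
    rw [hA.mulVec_eigenvectorBasis]
    rw [smul_dotProduct]
    rfl
  have hquad : ∑ v, x v * (A.mulVec x) v = ∑ i, hA.eigenvalues i * (κ i * κ i) := by
    have h1 := (hA.eigenvectorBasis).sum_inner_mul_inner xE AxE
    calc ∑ v, x v * (A.mulVec x) v = inner ℝ xE AxE := hinAx.symm
      _ = ∑ i, (inner ℝ xE (hA.eigenvectorBasis i) : ℝ) * inner ℝ (hA.eigenvectorBasis i) AxE :=
          h1.symm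
      _ = ∑ i, hA.eigenvalues i * (κ i * κ i) := by
          refine Finset.sum_congr rfl (fun i _ => ?_)
          rw [hinner2 i, hq2 i]
          ring
  have hk0 : κ i₀ = 0 := by
    calc κ i₀ = ∑ v, (α * (Bv i₀ v * e U v) + β * (Bv i₀ v * e W v)) := by
          rw [hκ]
          exact Finset.sum_congr rfl fun v _ => by rw [hx, elin v]; ring
      _ = α * a + β * b := by
          rw [Finset.sum_add_distrib, ← Finset.mul_sum, ← Finset.mul_sum, ha, hb]
      _ = 0 := hortho
  have hq := h α β
  have hsq : ∑ k, (α * U k + β * W k)^2 = ∑ k, y k * y k :=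
    Finset.sum_congr rfl fun k _ => by rw [hy]; ring
  have hsum2 : ∑ k, ∑ l, (α * U k + β * W k) * ((α * U l + β * W l) * A (p k) (p l))
      = ∑ v, x v * (A.mulVec x) v := by
    rw [hx, f1 y (A.mulVec (e y))]
    refine Finset.sum_congr rfl (fun k _ => ?_)
    have hmk : (A.mulVec (e y)) (p k) = ∑ l, y l * A (p k) (p l) := by
      have h0 : (A.mulVec (e y)) (p k) = ∑ v, A (p k) v * e y v := rfl
      rw [h0, Finset.sum_congr rfl (fun v _ => mul_comm (A (p k) v) (e y v)),
        f1 y (fun v => A (p k) v)]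
    rw [hmk, Finset.mul_sum]
  have hex : ∃ i₁, i₁ ≠ i₀ ∧ κ i₁ ≠ 0 := by
    by_contra hc
    push_neg at hc
    have hz : ∑ i, κ i * κ i = 0 := by
      apply Finset.sum_eq_zero
      intro i _
      by_cases hii : i = i₀
      · rw [hii, hk0, mul_zero]
      · rw [hc i hii, zero_mul]
    rw [hpar] at hz
    linarith
  obtain ⟨i₁, hi₁ne, hκ₁⟩ := hex
  have hpos : 0 < ∑ i ∈ Finset.univ.erase i₀, (-1/2 - hA.eigenvalues i) * (κ i * κ i) := by
    apply Finset.sum_pos'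
    · intro i hi
      have hltv := hi₀ i (Finset.mem_erase.mp hi).1
      have h2 : (0:ℝ) ≤ κ i * κ i := mul_self_nonneg _
      nlinarith
    · refine ⟨i₁, Finset.mem_erase.mpr ⟨hi₁ne, Finset.mem_univ _⟩, ?_⟩
      have hltv := hi₀ i₁ hi₁ne
      have h2 : 0 < κ i₁ * κ i₁ := mul_self_pos.mpr hκ₁
      nlinarith
  have e1 : ∑ i ∈ Finset.univ.erase i₀, κ i * κ i = ∑ k, y k * y k := by
    have h0 := Finset.sum_erase_add Finset.univ (fun i => κ i * κ i) (Finset.mem_univ i₀)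
    simp only [hk0, mul_zero, add_zero] at h0
    rw [h0, hpar]
  have e2 : ∑ i ∈ Finset.univ.erase i₀, hA.eigenvalues i * (κ i * κ i)
      = ∑ i, hA.eigenvalues i * (κ i * κ i) := by
    have h0 := Finset.sum_erase_add Finset.univ
      (fun i => hA.eigenvalues i * (κ i * κ i)) (Finset.mem_univ i₀)
    simp only [hk0, mul_zero, zero_mul, add_zero] at h0
    exact h0
  have e3 : ∑ i ∈ Finset.univ.erase i₀, (-1/2 - hA.eigenvalues i) * (κ i * κ i)
      = -1/2 * (∑ i ∈ Finset.univ.erase i₀, κ i * κ i)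
        - ∑ i ∈ Finset.univ.erase i₀, hA.eigenvalues i * (κ i * κ i) := by
    rw [Finset.mul_sum, ← Finset.sum_sub_distrib]
    exact Finset.sum_congr rfl fun i _ => by ring
  rw [hsq, hsum2, hquad] at hq
  rw [e3, e1, e2] at hpos
  linarith

lemma dist_eq_two_of {V : Type*} {G : SimpleGraph V} (hconn : G.Connected) {u v w : V}
    (hne : u ≠ v) (hnadj : ¬ G.Adj u v) (h1 : G.Adj u w) (h2 : G.Adj w v) :
    G.dist u v = 2 := by
  have hub : G.dist u v ≤ 2 := by
    have := hconn.dist_triangle (u := u) (v := w) (w := v)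
    rwa [SimpleGraph.dist_eq_one_iff_adj.mpr h1, SimpleGraph.dist_eq_one_iff_adj.mpr h2] at this
  have h0 : G.dist u v ≠ 0 := (hconn.pos_dist_of_ne hne).ne'
  have h1' : G.dist u v ≠ 1 := fun hc => hnadj (SimpleGraph.dist_eq_one_iff_adj.mp hc)
  omega

lemma mid_of_dist_two {V : Type*} {G : SimpleGraph V} (hconn : G.Connected) {u v : V}
    (h : G.dist u v = 2) : ∃ w, G.Adj u w ∧ G.Adj w v := by
  obtain ⟨p, hp⟩ := hconn.exists_walk_length_eq_dist u v
  rw [h] at hp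
  cases p with
  | nil => simp at hp
  | cons h1 q =>
    cases q with
    | nil => simp at hp
    | cons h2 r =>
      simp only [SimpleGraph.Walk.length_cons] at hp
      have hr : r.length = 0 := by omega
      have := SimpleGraph.Walk.eq_of_length_eq_zero hr
      subst this
      exact ⟨_, h1, h2⟩

lemma dist_eq_three_of {V : Type*} {G : SimpleGraph V} (hconn : G.Connected) {u v a c : V}
    (hne : u ≠ v) (hnadj : ¬ G.Adj u v) (hnocom : ∀ w, ¬ (G.Adj u w ∧ G.Adj w v))
    (h1 : G.Adj u a) (h2 : G.Adj a c) (h3 : G.Adj c v) :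
    G.dist u v = 3 := by
  have hub : G.dist u v ≤ 3 := by
    have t1 := hconn.dist_triangle (u := u) (v := a) (w := v)
    have t2 := hconn.dist_triangle (u := a) (v := c) (w := v)
    rw [SimpleGraph.dist_eq_one_iff_adj.mpr h1] at t1
    rw [SimpleGraph.dist_eq_one_iff_adj.mpr h2, SimpleGraph.dist_eq_one_iff_adj.mpr h3] at t2
    omega
  have h0 : G.dist u v ≠ 0 := (hconn.pos_dist_of_ne hne).ne'
  have h1' : G.dist u v ≠ 1 := fun hc => hnadj (SimpleGraph.dist_eq_one_iff_adj.mp hc)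
  have h2' : G.dist u v ≠ 2 := by
    intro hc
    obtain ⟨w, hw1, hw2⟩ := mid_of_dist_two hconn hc
    exact hnocom w ⟨hw1, hw2⟩
  omega

lemma inj_vec4 {V : Type*} {x0 x1 x2 x3 : V} (h01 : x0 ≠ x1) (h02 : x0 ≠ x2) (h03 : x0 ≠ x3) (h12 : x1 ≠ x2) (h13 : x1 ≠ x3) (h23 : x2 ≠ x3) :
    Function.Injective ![x0, x1, x2, x3] := by
  intro k l h
  fin_cases k <;> fin_cases l <;> first | rfl | exact absurd h h01 | exact absurd h.symm h01 | exact absurd h h02 | exact absurd h.symm h02 | exact absurd h h03 | exact absurd h.symm h03 | exact absurd h h12 | exact absurd h.symm h12 | exact absurd h h13 | exact absurd h.symm h13 | exact absurd h h23 | exact absurd h.symm h23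

lemma inj_vec5 {V : Type*} {x0 x1 x2 x3 x4 : V} (h01 : x0 ≠ x1) (h02 : x0 ≠ x2) (h03 : x0 ≠ x3) (h04 : x0 ≠ x4) (h12 : x1 ≠ x2) (h13 : x1 ≠ x3) (h14 : x1 ≠ x4) (h23 : x2 ≠ x3) (h24 : x2 ≠ x4) (h34 : x3 ≠ x4) :
    Function.Injective ![x0, x1, x2, x3, x4] := by
  intro k l h
  fin_cases k <;> fin_cases l <;> first | rfl | exact absurd h h01 | exact absurd h.symm h01 | exact absurd h h02 | exact absurd h.symm h02 | exact absurd h h03 | exact absurd h.symm h03 | exact absurd h h04 | exact absurd h.symm h04 | exact absurd h h12 | exact absurd h.symm h12 | exact absurd h h13 | exact absurd h.symm h13 | exact absurd h h14 | exact absurd h.symm h14 | exact absurd h h23 | exact absurd h.symm h23 | exact absurd h h24 | exact absurd h.symm h24 | exact absurd h h34 | exact absurd h.symm h34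

lemma inj_vec6 {V : Type*} {x0 x1 x2 x3 x4 x5 : V} (h01 : x0 ≠ x1) (h02 : x0 ≠ x2) (h03 : x0 ≠ x3) (h04 : x0 ≠ x4) (h05 : x0 ≠ x5) (h12 : x1 ≠ x2) (h13 : x1 ≠ x3) (h14 : x1 ≠ x4) (h15 : x1 ≠ x5) (h23 : x2 ≠ x3) (h24 : x2 ≠ x4) (h25 : x2 ≠ x5) (h34 : x3 ≠ x4) (h35 : x3 ≠ x5) (h45 : x4 ≠ x5) :
    Function.Injective ![x0, x1, x2, x3, x4, x5] := by
  intro k l h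
  fin_cases k <;> fin_cases l <;> first | rfl | exact absurd h h01 | exact absurd h.symm h01 | exact absurd h h02 | exact absurd h.symm h02 | exact absurd h h03 | exact absurd h.symm h03 | exact absurd h h04 | exact absurd h.symm h04 | exact absurd h h05 | exact absurd h.symm h05 | exact absurd h h12 | exact absurd h.symm h12 | exact absurd h h13 | exact absurd h.symm h13 | exact absurd h h14 | exact absurd h.symm h14 | exact absurd h h15 | exact absurd h.symm h15 | exact absurd h h23 | exact absurd h.symm h23 | exact absurd h h24 | exact absurd h.symm h24 | exact absurd h h25 | exact absurd h.symm h25 | exact absurd h h34 | exact absurd h.symm h34 | exact absurd h h35 | exact absurd h.symm h35 | exact absurd h h45 | exact absurd h.symm h45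


set_option maxHeartbeats 2000000 in
theorem split_graph_at_most_one_big_indep_vertex {V : Type*} [Fintype V] [DecidableEq V]
    (G : SimpleGraph V) [DecidableRel G.Adj] (hconn : G.Connected)
    (K I : Finset V)
    (hclique : G.IsClique (K : Set V))
    (hmax : ∀ t : Finset V, G.IsClique (t : Set V) → t.card ≤ K.card)
    (hindep : ∀ x ∈ I, ∀ y ∈ I, ¬ G.Adj x y)
    (hdisj : Disjoint K I) (hunion : K ∪ I = Finset.univ)
    (hs : 3 ≤ K.card)
    (hl2 : lambda2 (distMatrix G) < -1/2) :
    (I.filter (fun z => 2 ≤ (K.filter (fun x => G.Adj z x)).card)).card ≤ 1 := by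
  classical
  by_contra hcon
  push_neg at hcon
  obtain ⟨z₁, hz₁m, z₂, hz₂m, hz12⟩ := Finset.one_lt_card.mp hcon
  rw [Finset.mem_filter] at hz₁m hz₂m
  obtain ⟨hz₁I, hz₁2⟩ := hz₁m
  obtain ⟨hz₂I, hz₂2⟩ := hz₂m
  have hH : (distMatrix G).IsHermitian := by
    ext i j
    rw [Matrix.conjTranspose_apply]
    show star (((G.dist j i : ℕ) : ℝ)) = ((G.dist i j : ℕ) : ℝ)
    rw [star_trivial, SimpleGraph.dist_comm]
  have hcV : 2 ≤ Fintype.card V := by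
    have h1 : K.card ≤ Finset.univ.card := Finset.card_le_univ K
    rw [Finset.card_univ] at h1
    omega
  have hKadj : ∀ a b : V, a ∈ K → b ∈ K → a ≠ b → G.Adj a b :=
    fun a b ha hb hne => hclique ha hb hne
  have hIK : ∀ z ∈ I, z ∉ K := fun z hz hzK => Finset.disjoint_left.mp hdisj hzK hz
  have hnadj12 : ¬ G.Adj z₁ z₂ := hindep z₁ hz₁I z₂ hz₂I
  have hnotall : ∀ z ∈ I, ∃ c ∈ K, ¬ G.Adj z c := by
    intro z hz
    by_contra hc
    push_neg at hc
    have hcl : G.IsClique ((insert z K : Finset V) : Set V) := by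
      rw [Finset.coe_insert]
      exact hclique.insert (fun b hb _ => (hc b hb))
    have hcard := hmax _ hcl
    rw [Finset.card_insert_of_notMem (hIK z hz)] at hcard
    omega
  obtain ⟨a₁, ha₁m, b₁, hb₁m, hab₁⟩ := Finset.one_lt_card.mp
    (by omega : 1 < (K.filter (fun x => G.Adj z₁ x)).card)
  obtain ⟨a₂, ha₂m, b₂, hb₂m, hab₂⟩ := Finset.one_lt_card.mp
    (by omega : 1 < (K.filter (fun x => G.Adj z₂ x)).card)
  rw [Finset.mem_filter] at ha₁m hb₁m ha₂m hb₂m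
  obtain ⟨ha₁K, ha₁adj⟩ := ha₁m
  obtain ⟨hb₁K, hb₁adj⟩ := hb₁m
  obtain ⟨ha₂K, ha₂adj⟩ := ha₂m
  obtain ⟨hb₂K, hb₂adj⟩ := hb₂m
  have hz₁K : z₁ ∉ K := hIK z₁ hz₁I
  have hz₂K : z₂ ∉ K := hIK z₂ hz₂I
  by_cases hcom : ∃ w, G.Adj z₁ w ∧ G.Adj z₂ w
  · obtain ⟨w, hw1, hw2⟩ := hcom
    have hwK : w ∈ K := by
      have hw : w ∈ K ∪ I := by rw [hunion]; exact Finset.mem_univ w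
      rcases Finset.mem_union.mp hw with h | h
      · exact h
      · exact absurd hw1 ((hindep z₁ hz₁I w h))
    have hd12 : G.dist z₁ z₂ = 2 := dist_eq_two_of hconn hz12 hnadj12 hw1 hw2.symm
    by_cases hex : (∃ u ∈ K, G.Adj z₁ u ∧ ¬ G.Adj z₂ u) ∧ (∃ u ∈ K, G.Adj z₂ u ∧ ¬ G.Adj z₁ u)
    · obtain ⟨⟨a, haK, ha1, hna2⟩, ⟨c, hcK, hc2, hnc1⟩⟩ := hex
      have hac : a ≠ c := fun h => hnc1 (h ▸ ha1)
      have hz1a : z₁ ≠ a := fun h => hz₁K (h ▸ haK)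
      have hz1c : z₁ ≠ c := fun h => hz₁K (h ▸ hcK)
      have hz2a : z₂ ≠ a := fun h => hz₂K (h ▸ haK)
      have hz2c : z₂ ≠ c := fun h => hz₂K (h ▸ hcK)

      have nd01 : G.dist z₁ z₂ = 2 := hd12
      have nd02 : G.dist z₁ a = 1 := SimpleGraph.dist_eq_one_iff_adj.mpr ha1
      have nd03 : G.dist z₁ c = 2 := dist_eq_two_of hconn hz1c (fun hadj => hnc1 hadj) ha1 (hKadj a c haK hcK hac)
      have nd12 : G.dist z₂ a = 2 := dist_eq_two_of hconn hz2a (fun hadj => hna2 hadj) hc2 (hKadj c a hcK haK (Ne.symm hac))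
      have nd13 : G.dist z₂ c = 1 := SimpleGraph.dist_eq_one_iff_adj.mpr hc2
      have nd23 : G.dist a c = 1 := hKadj a c haK hcK hac |> SimpleGraph.dist_eq_one_iff_adj.mpr
      have E00 : distMatrix G z₁ z₁ = 0 := by
        show ((G.dist z₁ z₁ : ℕ) : ℝ) = 0
        rw [SimpleGraph.dist_self]; norm_num
      have E01 : distMatrix G z₁ z₂ = 2 := by
        show ((G.dist z₁ z₂ : ℕ) : ℝ) = 2
        rw [nd01]; norm_num
      have E02 : distMatrix G z₁ a = 1 := by
        show ((G.dist z₁ a : ℕ) : ℝ) = 1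
        rw [nd02]; norm_num
      have E03 : distMatrix G z₁ c = 2 := by
        show ((G.dist z₁ c : ℕ) : ℝ) = 2
        rw [nd03]; norm_num
      have E10 : distMatrix G z₂ z₁ = 2 := by
        show ((G.dist z₂ z₁ : ℕ) : ℝ) = 2
        rw [SimpleGraph.dist_comm, nd01]; norm_num
      have E11 : distMatrix G z₂ z₂ = 0 := by
        show ((G.dist z₂ z₂ : ℕ) : ℝ) = 0
        rw [SimpleGraph.dist_self]; norm_num
      have E12 : distMatrix G z₂ a = 2 := by
        show ((G.dist z₂ a : ℕ) : ℝ) = 2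
        rw [nd12]; norm_num
      have E13 : distMatrix G z₂ c = 1 := by
        show ((G.dist z₂ c : ℕ) : ℝ) = 1
        rw [nd13]; norm_num
      have E20 : distMatrix G a z₁ = 1 := by
        show ((G.dist a z₁ : ℕ) : ℝ) = 1
        rw [SimpleGraph.dist_comm, nd02]; norm_num
      have E21 : distMatrix G a z₂ = 2 := by
        show ((G.dist a z₂ : ℕ) : ℝ) = 2
        rw [SimpleGraph.dist_comm, nd12]; norm_num
      have E22 : distMatrix G a a = 0 := by
        show ((G.dist a a : ℕ) : ℝ) = 0
        rw [SimpleGraph.dist_self]; norm_num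
      have E23 : distMatrix G a c = 1 := by
        show ((G.dist a c : ℕ) : ℝ) = 1
        rw [nd23]; norm_num
      have E30 : distMatrix G c z₁ = 2 := by
        show ((G.dist c z₁ : ℕ) : ℝ) = 2
        rw [SimpleGraph.dist_comm, nd03]; norm_num
      have E31 : distMatrix G c z₂ = 1 := by
        show ((G.dist c z₂ : ℕ) : ℝ) = 1
        rw [SimpleGraph.dist_comm, nd13]; norm_num
      have E32 : distMatrix G c a = 1 := by
        show ((G.dist c a : ℕ) : ℝ) = 1
        rw [SimpleGraph.dist_comm, nd23]; norm_num
      have E33 : distMatrix G c c = 0 := by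
        show ((G.dist c c : ℕ) : ℝ) = 0
        rw [SimpleGraph.dist_self]; norm_num
      have hinj : Function.Injective ![z₁, z₂, a, c] := inj_vec4 hz12 hz1a hz1c hz2a hz2c hac
      have hIneq : ∀ α β : ℝ, -1/2 * (∑ k, (α * (![(13:ℝ), 13, 11, 11]) k + β * (![(8:ℝ), -8, -13, 13]) k)^2)
          ≤ ∑ k, ∑ l, (α * (![(13:ℝ), 13, 11, 11]) k + β * (![(8:ℝ), -8, -13, 13]) k) * ((α * (![(13:ℝ), 13, 11, 11]) l + β * (![(8:ℝ), -8, -13, 13]) l) * (distMatrix G) ((![z₁, z₂, a, c]) k) ((![z₁, z₂, a, c]) l)) := by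
        intro α β
        simp only [Fin.sum_univ_succ, Fin.sum_univ_zero, Matrix.cons_val_zero,
          Matrix.cons_val_succ, E00, E01, E02, E03, E10, E11, E12, E13, E20, E21, E22, E23, E30, E31, E32, E33, add_zero]
        linarith [sq_nonneg α, sq_nonneg β, sq_nonneg ((2924:ℝ)*α + (0)*β)]
      exact key_lemma (distMatrix G) hH hcV ![z₁, z₂, a, c] hinj _ _
        (by norm_num [Fin.sum_univ_succ, Matrix.cons_val_zero, Matrix.cons_val_succ])
        (by norm_num [Fin.sum_univ_succ, Matrix.cons_val_zero, Matrix.cons_val_succ])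
        (by norm_num [Fin.sum_univ_succ, Matrix.cons_val_zero, Matrix.cons_val_succ])
        hIneq hl2
    · rw [not_and_or] at hex
      push_neg at hex
      obtain ⟨a, b, c, haK, hbK, hcK, hab, ha1, ha2, hb1, hb2, hnc1, hnc2⟩ :
          ∃ a b c, a ∈ K ∧ b ∈ K ∧ c ∈ K ∧ a ≠ b ∧ G.Adj z₁ a ∧ G.Adj z₂ a ∧
            G.Adj z₁ b ∧ G.Adj z₂ b ∧ ¬ G.Adj z₁ c ∧ ¬ G.Adj z₂ c := by
        rcases hex with h1 | h2
        · obtain ⟨c, hcK, hnc2⟩ := hnotall z₂ hz₂I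
          exact ⟨a₁, b₁, c, ha₁K, hb₁K, hcK, hab₁, ha₁adj, h1 a₁ ha₁K ha₁adj,
            hb₁adj, h1 b₁ hb₁K hb₁adj, fun h => hnc2 (h1 c hcK h), hnc2⟩
        · obtain ⟨c, hcK, hnc1⟩ := hnotall z₁ hz₁I
          exact ⟨a₂, b₂, c, ha₂K, hb₂K, hcK, hab₂, h2 a₂ ha₂K ha₂adj, ha₂adj,
            h2 b₂ hb₂K hb₂adj, hb₂adj, hnc1, fun h => hnc1 (h2 c hcK h)⟩
      have hac : a ≠ c := fun h => hnc1 (h ▸ ha1)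
      have hbc : b ≠ c := fun h => hnc1 (h ▸ hb1)
      have hz1a : z₁ ≠ a := fun h => hz₁K (h ▸ haK)
      have hz1b : z₁ ≠ b := fun h => hz₁K (h ▸ hbK)
      have hz1c : z₁ ≠ c := fun h => hz₁K (h ▸ hcK)
      have hz2a : z₂ ≠ a := fun h => hz₂K (h ▸ haK)
      have hz2b : z₂ ≠ b := fun h => hz₂K (h ▸ hbK)
      have hz2c : z₂ ≠ c := fun h => hz₂K (h ▸ hcK)

      have nd01 : G.dist z₁ z₂ = 2 := hd12
      have nd02 : G.dist z₁ a = 1 := SimpleGraph.dist_eq_one_iff_adj.mpr ha1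
      have nd03 : G.dist z₁ b = 1 := SimpleGraph.dist_eq_one_iff_adj.mpr hb1
      have nd04 : G.dist z₁ c = 2 := dist_eq_two_of hconn hz1c hnc1 ha1 (hKadj a c haK hcK hac)
      have nd12 : G.dist z₂ a = 1 := SimpleGraph.dist_eq_one_iff_adj.mpr ha2
      have nd13 : G.dist z₂ b = 1 := SimpleGraph.dist_eq_one_iff_adj.mpr hb2
      have nd14 : G.dist z₂ c = 2 := dist_eq_two_of hconn hz2c hnc2 ha2 (hKadj a c haK hcK hac)
      have nd23 : G.dist a b = 1 := SimpleGraph.dist_eq_one_iff_adj.mpr (hKadj a b haK hbK hab)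
      have nd24 : G.dist a c = 1 := SimpleGraph.dist_eq_one_iff_adj.mpr (hKadj a c haK hcK hac)
      have nd34 : G.dist b c = 1 := SimpleGraph.dist_eq_one_iff_adj.mpr (hKadj b c hbK hcK hbc)
      have E00 : distMatrix G z₁ z₁ = 0 := by
        show ((G.dist z₁ z₁ : ℕ) : ℝ) = 0
        rw [SimpleGraph.dist_self]; norm_num
      have E01 : distMatrix G z₁ z₂ = 2 := by
        show ((G.dist z₁ z₂ : ℕ) : ℝ) = 2
        rw [nd01]; norm_num
      have E02 : distMatrix G z₁ a = 1 := by
        show ((G.dist z₁ a : ℕ) : ℝ) = 1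
        rw [nd02]; norm_num
      have E03 : distMatrix G z₁ b = 1 := by
        show ((G.dist z₁ b : ℕ) : ℝ) = 1
        rw [nd03]; norm_num
      have E04 : distMatrix G z₁ c = 2 := by
        show ((G.dist z₁ c : ℕ) : ℝ) = 2
        rw [nd04]; norm_num
      have E10 : distMatrix G z₂ z₁ = 2 := by
        show ((G.dist z₂ z₁ : ℕ) : ℝ) = 2
        rw [SimpleGraph.dist_comm, nd01]; norm_num
      have E11 : distMatrix G z₂ z₂ = 0 := by
        show ((G.dist z₂ z₂ : ℕ) : ℝ) = 0
        rw [SimpleGraph.dist_self]; norm_num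
      have E12 : distMatrix G z₂ a = 1 := by
        show ((G.dist z₂ a : ℕ) : ℝ) = 1
        rw [nd12]; norm_num
      have E13 : distMatrix G z₂ b = 1 := by
        show ((G.dist z₂ b : ℕ) : ℝ) = 1
        rw [nd13]; norm_num
      have E14 : distMatrix G z₂ c = 2 := by
        show ((G.dist z₂ c : ℕ) : ℝ) = 2
        rw [nd14]; norm_num
      have E20 : distMatrix G a z₁ = 1 := by
        show ((G.dist a z₁ : ℕ) : ℝ) = 1
        rw [SimpleGraph.dist_comm, nd02]; norm_num
      have E21 : distMatrix G a z₂ = 1 := by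
        show ((G.dist a z₂ : ℕ) : ℝ) = 1
        rw [SimpleGraph.dist_comm, nd12]; norm_num
      have E22 : distMatrix G a a = 0 := by
        show ((G.dist a a : ℕ) : ℝ) = 0
        rw [SimpleGraph.dist_self]; norm_num
      have E23 : distMatrix G a b = 1 := by
        show ((G.dist a b : ℕ) : ℝ) = 1
        rw [nd23]; norm_num
      have E24 : distMatrix G a c = 1 := by
        show ((G.dist a c : ℕ) : ℝ) = 1
        rw [nd24]; norm_num
      have E30 : distMatrix G b z₁ = 1 := by
        show ((G.dist b z₁ : ℕ) : ℝ) = 1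
        rw [SimpleGraph.dist_comm, nd03]; norm_num
      have E31 : distMatrix G b z₂ = 1 := by
        show ((G.dist b z₂ : ℕ) : ℝ) = 1
        rw [SimpleGraph.dist_comm, nd13]; norm_num
      have E32 : distMatrix G b a = 1 := by
        show ((G.dist b a : ℕ) : ℝ) = 1
        rw [SimpleGraph.dist_comm, nd23]; norm_num
      have E33 : distMatrix G b b = 0 := by
        show ((G.dist b b : ℕ) : ℝ) = 0
        rw [SimpleGraph.dist_self]; norm_num
      have E34 : distMatrix G b c = 1 := by
        show ((G.dist b c : ℕ) : ℝ) = 1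
        rw [nd34]; norm_num
      have E40 : distMatrix G c z₁ = 2 := by
        show ((G.dist c z₁ : ℕ) : ℝ) = 2
        rw [SimpleGraph.dist_comm, nd04]; norm_num
      have E41 : distMatrix G c z₂ = 2 := by
        show ((G.dist c z₂ : ℕ) : ℝ) = 2
        rw [SimpleGraph.dist_comm, nd14]; norm_num
      have E42 : distMatrix G c a = 1 := by
        show ((G.dist c a : ℕ) : ℝ) = 1
        rw [SimpleGraph.dist_comm, nd24]; norm_num
      have E43 : distMatrix G c b = 1 := by
        show ((G.dist c b : ℕ) : ℝ) = 1
        rw [SimpleGraph.dist_comm, nd34]; norm_num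
      have E44 : distMatrix G c c = 0 := by
        show ((G.dist c c : ℕ) : ℝ) = 0
        rw [SimpleGraph.dist_self]; norm_num
      have hinj : Function.Injective ![z₁, z₂, a, b, c] := inj_vec5 hz12 hz1a hz1b hz1c hz2a hz2b hz2c hab hac hbc
      have hIneq : ∀ α β : ℝ, -1/2 * (∑ k, (α * (![(500:ℝ), 500, 343, 343, 500]) k + β * (![(343:ℝ), 343, -750, -750, 343]) k)^2)
          ≤ ∑ k, ∑ l, (α * (![(500:ℝ), 500, 343, 343, 500]) k + β * (![(343:ℝ), 343, -750, -750, 343]) k) * ((α * (![(500:ℝ), 500, 343, 343, 500]) l + β * (![(343:ℝ), 343, -750, -750, 343]) l) * (distMatrix G) ((![z₁, z₂, a, b, c]) k) ((![z₁, z₂, a, b, c]) l)) := by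
        intro α β
        simp only [Fin.sum_univ_succ, Fin.sum_univ_zero, Matrix.cons_val_zero,
          Matrix.cons_val_succ, E00, E01, E02, E03, E04, E10, E11, E12, E13, E14, E20, E21, E22, E23, E24, E30, E31, E32, E33, E34, E40, E41, E42, E43, E44, add_zero]
        linarith [sq_nonneg α, sq_nonneg β, sq_nonneg ((5785947:ℝ)*α + (-606)*β)]
      exact key_lemma (distMatrix G) hH hcV ![z₁, z₂, a, b, c] hinj _ _
        (by norm_num [Fin.sum_univ_succ, Matrix.cons_val_zero, Matrix.cons_val_succ])
        (by norm_num [Fin.sum_univ_succ, Matrix.cons_val_zero, Matrix.cons_val_succ])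
        (by norm_num [Fin.sum_univ_succ, Matrix.cons_val_zero, Matrix.cons_val_succ])
        hIneq hl2
  · have ha₁a₂ : a₁ ≠ a₂ := fun h => hcom ⟨a₁, ha₁adj, by rw [h]; exact ha₂adj⟩
    have ha₁b₂ : a₁ ≠ b₂ := fun h => hcom ⟨a₁, ha₁adj, by rw [h]; exact hb₂adj⟩
    have hb₁a₂ : b₁ ≠ a₂ := fun h => hcom ⟨b₁, hb₁adj, by rw [h]; exact ha₂adj⟩
    have hb₁b₂ : b₁ ≠ b₂ := fun h => hcom ⟨b₁, hb₁adj, by rw [h]; exact hb₂adj⟩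
    have hz1a1 : z₁ ≠ a₁ := fun h => hz₁K (h ▸ ha₁K)
    have hz1b1 : z₁ ≠ b₁ := fun h => hz₁K (h ▸ hb₁K)
    have hz1a2 : z₁ ≠ a₂ := fun h => hz₁K (h ▸ ha₂K)
    have hz1b2 : z₁ ≠ b₂ := fun h => hz₁K (h ▸ hb₂K)
    have hz2a1 : z₂ ≠ a₁ := fun h => hz₂K (h ▸ ha₁K)
    have hz2b1 : z₂ ≠ b₁ := fun h => hz₂K (h ▸ hb₁K)
    have hz2a2 : z₂ ≠ a₂ := fun h => hz₂K (h ▸ ha₂K)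
    have hz2b2 : z₂ ≠ b₂ := fun h => hz₂K (h ▸ hb₂K)
    have hn1a2 : ¬ G.Adj z₁ a₂ := fun h => hcom ⟨a₂, h, ha₂adj⟩
    have hn1b2 : ¬ G.Adj z₁ b₂ := fun h => hcom ⟨b₂, h, hb₂adj⟩
    have hn2a1 : ¬ G.Adj z₂ a₁ := fun h => hcom ⟨a₁, ha₁adj, h⟩
    have hn2b1 : ¬ G.Adj z₂ b₁ := fun h => hcom ⟨b₁, hb₁adj, h⟩
    have nd01 : G.dist z₁ z₂ = 3 := dist_eq_three_of hconn hz12 hnadj12 (fun w hw => hcom ⟨w, hw.1, hw.2.symm⟩)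
      ha₁adj (hKadj a₁ a₂ ha₁K ha₂K ha₁a₂) ha₂adj.symm
    have nd02 : G.dist z₁ a₁ = 1 := SimpleGraph.dist_eq_one_iff_adj.mpr ha₁adj
    have nd03 : G.dist z₁ b₁ = 1 := SimpleGraph.dist_eq_one_iff_adj.mpr hb₁adj
    have nd04 : G.dist z₁ a₂ = 2 := dist_eq_two_of hconn hz1a2 hn1a2 ha₁adj (hKadj a₁ a₂ ha₁K ha₂K ha₁a₂)
    have nd05 : G.dist z₁ b₂ = 2 := dist_eq_two_of hconn hz1b2 hn1b2 ha₁adj (hKadj a₁ b₂ ha₁K hb₂K ha₁b₂)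
    have nd12 : G.dist z₂ a₁ = 2 := dist_eq_two_of hconn hz2a1 hn2a1 ha₂adj (hKadj a₂ a₁ ha₂K ha₁K (Ne.symm ha₁a₂))
    have nd13 : G.dist z₂ b₁ = 2 := dist_eq_two_of hconn hz2b1 hn2b1 ha₂adj (hKadj a₂ b₁ ha₂K hb₁K (Ne.symm hb₁a₂))
    have nd14 : G.dist z₂ a₂ = 1 := SimpleGraph.dist_eq_one_iff_adj.mpr ha₂adj
    have nd15 : G.dist z₂ b₂ = 1 := SimpleGraph.dist_eq_one_iff_adj.mpr hb₂adj
    have nd23 : G.dist a₁ b₁ = 1 := SimpleGraph.dist_eq_one_iff_adj.mpr (hKadj a₁ b₁ ha₁K hb₁K hab₁)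
    have nd24 : G.dist a₁ a₂ = 1 := SimpleGraph.dist_eq_one_iff_adj.mpr (hKadj a₁ a₂ ha₁K ha₂K ha₁a₂)
    have nd25 : G.dist a₁ b₂ = 1 := SimpleGraph.dist_eq_one_iff_adj.mpr (hKadj a₁ b₂ ha₁K hb₂K ha₁b₂)
    have nd34 : G.dist b₁ a₂ = 1 := SimpleGraph.dist_eq_one_iff_adj.mpr (hKadj b₁ a₂ hb₁K ha₂K hb₁a₂)
    have nd35 : G.dist b₁ b₂ = 1 := SimpleGraph.dist_eq_one_iff_adj.mpr (hKadj b₁ b₂ hb₁K hb₂K hb₁b₂)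
    have nd45 : G.dist a₂ b₂ = 1 := SimpleGraph.dist_eq_one_iff_adj.mpr (hKadj a₂ b₂ ha₂K hb₂K hab₂)
    have E00 : distMatrix G z₁ z₁ = 0 := by
      show ((G.dist z₁ z₁ : ℕ) : ℝ) = 0
      rw [SimpleGraph.dist_self]; norm_num
    have E01 : distMatrix G z₁ z₂ = 3 := by
      show ((G.dist z₁ z₂ : ℕ) : ℝ) = 3
      rw [nd01]; norm_num
    have E02 : distMatrix G z₁ a₁ = 1 := by
      show ((G.dist z₁ a₁ : ℕ) : ℝ) = 1
      rw [nd02]; norm_num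
    have E03 : distMatrix G z₁ b₁ = 1 := by
      show ((G.dist z₁ b₁ : ℕ) : ℝ) = 1
      rw [nd03]; norm_num
    have E04 : distMatrix G z₁ a₂ = 2 := by
      show ((G.dist z₁ a₂ : ℕ) : ℝ) = 2
      rw [nd04]; norm_num
    have E05 : distMatrix G z₁ b₂ = 2 := by
      show ((G.dist z₁ b₂ : ℕ) : ℝ) = 2
      rw [nd05]; norm_num
    have E10 : distMatrix G z₂ z₁ = 3 := by
      show ((G.dist z₂ z₁ : ℕ) : ℝ) = 3
      rw [SimpleGraph.dist_comm, nd01]; norm_num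
    have E11 : distMatrix G z₂ z₂ = 0 := by
      show ((G.dist z₂ z₂ : ℕ) : ℝ) = 0
      rw [SimpleGraph.dist_self]; norm_num
    have E12 : distMatrix G z₂ a₁ = 2 := by
      show ((G.dist z₂ a₁ : ℕ) : ℝ) = 2
      rw [nd12]; norm_num
    have E13 : distMatrix G z₂ b₁ = 2 := by
      show ((G.dist z₂ b₁ : ℕ) : ℝ) = 2
      rw [nd13]; norm_num
    have E14 : distMatrix G z₂ a₂ = 1 := by
      show ((G.dist z₂ a₂ : ℕ) : ℝ) = 1
      rw [nd14]; norm_num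
    have E15 : distMatrix G z₂ b₂ = 1 := by
      show ((G.dist z₂ b₂ : ℕ) : ℝ) = 1
      rw [nd15]; norm_num
    have E20 : distMatrix G a₁ z₁ = 1 := by
      show ((G.dist a₁ z₁ : ℕ) : ℝ) = 1
      rw [SimpleGraph.dist_comm, nd02]; norm_num
    have E21 : distMatrix G a₁ z₂ = 2 := by
      show ((G.dist a₁ z₂ : ℕ) : ℝ) = 2
      rw [SimpleGraph.dist_comm, nd12]; norm_num
    have E22 : distMatrix G a₁ a₁ = 0 := by
      show ((G.dist a₁ a₁ : ℕ) : ℝ) = 0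
      rw [SimpleGraph.dist_self]; norm_num
    have E23 : distMatrix G a₁ b₁ = 1 := by
      show ((G.dist a₁ b₁ : ℕ) : ℝ) = 1
      rw [nd23]; norm_num
    have E24 : distMatrix G a₁ a₂ = 1 := by
      show ((G.dist a₁ a₂ : ℕ) : ℝ) = 1
      rw [nd24]; norm_num
    have E25 : distMatrix G a₁ b₂ = 1 := by
      show ((G.dist a₁ b₂ : ℕ) : ℝ) = 1
      rw [nd25]; norm_num
    have E30 : distMatrix G b₁ z₁ = 1 := by
      show ((G.dist b₁ z₁ : ℕ) : ℝ) = 1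
      rw [SimpleGraph.dist_comm, nd03]; norm_num
    have E31 : distMatrix G b₁ z₂ = 2 := by
      show ((G.dist b₁ z₂ : ℕ) : ℝ) = 2
      rw [SimpleGraph.dist_comm, nd13]; norm_num
    have E32 : distMatrix G b₁ a₁ = 1 := by
      show ((G.dist b₁ a₁ : ℕ) : ℝ) = 1
      rw [SimpleGraph.dist_comm, nd23]; norm_num
    have E33 : distMatrix G b₁ b₁ = 0 := by
      show ((G.dist b₁ b₁ : ℕ) : ℝ) = 0
      rw [SimpleGraph.dist_self]; norm_num
    have E34 : distMatrix G b₁ a₂ = 1 := by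
      show ((G.dist b₁ a₂ : ℕ) : ℝ) = 1
      rw [nd34]; norm_num
    have E35 : distMatrix G b₁ b₂ = 1 := by
      show ((G.dist b₁ b₂ : ℕ) : ℝ) = 1
      rw [nd35]; norm_num
    have E40 : distMatrix G a₂ z₁ = 2 := by
      show ((G.dist a₂ z₁ : ℕ) : ℝ) = 2
      rw [SimpleGraph.dist_comm, nd04]; norm_num
    have E41 : distMatrix G a₂ z₂ = 1 := by
      show ((G.dist a₂ z₂ : ℕ) : ℝ) = 1
      rw [SimpleGraph.dist_comm, nd14]; norm_num
    have E42 : distMatrix G a₂ a₁ = 1 := by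
      show ((G.dist a₂ a₁ : ℕ) : ℝ) = 1
      rw [SimpleGraph.dist_comm, nd24]; norm_num
    have E43 : distMatrix G a₂ b₁ = 1 := by
      show ((G.dist a₂ b₁ : ℕ) : ℝ) = 1
      rw [SimpleGraph.dist_comm, nd34]; norm_num
    have E44 : distMatrix G a₂ a₂ = 0 := by
      show ((G.dist a₂ a₂ : ℕ) : ℝ) = 0
      rw [SimpleGraph.dist_self]; norm_num
    have E45 : distMatrix G a₂ b₂ = 1 := by
      show ((G.dist a₂ b₂ : ℕ) : ℝ) = 1
      rw [nd45]; norm_num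
    have E50 : distMatrix G b₂ z₁ = 2 := by
      show ((G.dist b₂ z₁ : ℕ) : ℝ) = 2
      rw [SimpleGraph.dist_comm, nd05]; norm_num
    have E51 : distMatrix G b₂ z₂ = 1 := by
      show ((G.dist b₂ z₂ : ℕ) : ℝ) = 1
      rw [SimpleGraph.dist_comm, nd15]; norm_num
    have E52 : distMatrix G b₂ a₁ = 1 := by
      show ((G.dist b₂ a₁ : ℕ) : ℝ) = 1
      rw [SimpleGraph.dist_comm, nd25]; norm_num
    have E53 : distMatrix G b₂ b₁ = 1 := by
      show ((G.dist b₂ b₁ : ℕ) : ℝ) = 1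
      rw [SimpleGraph.dist_comm, nd35]; norm_num
    have E54 : distMatrix G b₂ a₂ = 1 := by
      show ((G.dist b₂ a₂ : ℕ) : ℝ) = 1
      rw [SimpleGraph.dist_comm, nd45]; norm_num
    have E55 : distMatrix G b₂ b₂ = 0 := by
      show ((G.dist b₂ b₂ : ℕ) : ℝ) = 0
      rw [SimpleGraph.dist_self]; norm_num
    have hinj : Function.Injective ![z₁, z₂, a₁, b₁, a₂, b₂] := inj_vec6 hz12 hz1a1 hz1b1 hz1a2 hz1b2 hz2a1 hz2b1 hz2a2 hz2b2 hab₁ ha₁a₂ ha₁b₂ hb₁a₂ hb₁b₂ hab₂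
    have hIneq : ∀ α β : ℝ, -1/2 * (∑ k, (α * (![(1000:ℝ), 1000, 707, 707, 707, 707]) k + β * (![(-325:ℝ), 325, 444, 444, -444, -444]) k)^2)
        ≤ ∑ k, ∑ l, (α * (![(1000:ℝ), 1000, 707, 707, 707, 707]) k + β * (![(-325:ℝ), 325, 444, 444, -444, -444]) k) * ((α * (![(1000:ℝ), 1000, 707, 707, 707, 707]) l + β * (![(-325:ℝ), 325, 444, 444, -444, -444]) l) * (distMatrix G) ((![z₁, z₂, a₁, b₁, a₂, b₂]) k) ((![z₁, z₂, a₁, b₁, a₂, b₂]) l)) := by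
      intro α β
      simp only [Fin.sum_univ_succ, Fin.sum_univ_zero, Matrix.cons_val_zero,
        Matrix.cons_val_succ, E00, E01, E02, E03, E04, E05, E10, E11, E12, E13, E14, E15, E20, E21, E22, E23, E24, E25, E30, E31, E32, E33, E34, E35, E40, E41, E42, E43, E44, E45, E50, E51, E52, E53, E54, E55, add_zero]
      linarith [sq_nonneg α, sq_nonneg β, sq_nonneg ((30965886:ℝ)*α + (0)*β)]
    exact key_lemma (distMatrix G) hH hcV ![z₁, z₂, a₁, b₁, a₂, b₂] hinj _ _
      (by norm_num [Fin.sum_univ_succ, Matrix.cons_val_zero, Matrix.cons_val_succ])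
      (by norm_num [Fin.sum_univ_succ, Matrix.cons_val_zero, Matrix.cons_val_succ])
      (by norm_num [Fin.sum_univ_succ, Matrix.cons_val_zero, Matrix.cons_val_succ])
      hIneq hl2
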